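/- Let α, β, ρ, x0, ū be positive real numbers satisfying (β − ρ·x0)·ū − α·x0 > 0, and let t_sw : (0, ∞) → ℝ be the function assigning to each terminal time t_f > 0 the unique switching time t_sw(t_f) ∈ (0, t_f) with F(t_sw(t_f)) = x0. Then d t_sw/d t_f = 1 + α·x0/((ρ·x0 − β·exp(α·t_sw(t_f)))·ū) > 0 for every t_f > 0, i.e. t_sw is strictly increasing. -/

import Mathlib

/-- `F τ` is the terminal value `x(t_f)` of the bilinear furnace model started at
`x(0) = x0`, with input `u ≡ 0` on `[0, τ)` and `u ≡ ū` on `[τ, t_f]`. -/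
noncomputable def F (α β ρ x0 ubar tf τ : ℝ) : ℝ :=
  Real.exp ((-α - ρ * ubar) * (tf - τ)) *
      (x0 * Real.exp (-α * τ) - β * ubar / (α + ρ * ubar)) +
    β * ubar / (α + ρ * ubar)

/-- Under assumption (A), the switching-time function satisfies
`d t_sw / d t_f = 1 + α·x0 / ((ρ·x0 − β·exp(α·t_sw(t_f)))·ū) > 0` for every `t_f > 0`,
i.e. `t_sw` is strictly increasing on `(0, ∞)`. -/
theorem stmt_13 (α β ρ x0 ubar : ℝ)
    (hα : 0 < α) (hβ : 0 < β) (hρ : 0 < ρ) (hx0 : 0 < x0) (hu : 0 < ubar)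
    (hA : (β - ρ * x0) * ubar - α * x0 > 0)
    (tsw : ℝ → ℝ)
    (htsw : ∀ tf : ℝ, 0 < tf →
      tsw tf ∈ Set.Ioo 0 tf ∧ F α β ρ x0 ubar tf (tsw tf) = x0) :
    (∀ tf : ℝ, 0 < tf →
      HasDerivAt tsw
          (1 + α * x0 / ((ρ * x0 - β * Real.exp (α * tsw tf)) * ubar)) tf ∧
        0 < 1 + α * x0 / ((ρ * x0 - β * Real.exp (α * tsw tf)) * ubar)) ∧
      StrictMonoOn tsw (Set.Ioi 0) := by
  have hApos : 0 < α + ρ * ubar := by positivity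
  set K : ℝ := β * ubar / (α + ρ * ubar) with hKdef
  have hKx : x0 < K := by
    rw [hKdef, lt_div_iff₀ hApos]; nlinarith
  have hβρ : ρ * x0 < β := by nlinarith
  -- D τ := x0 * exp(-α τ) - K is negative for τ ≥ 0
  have hDneg : ∀ τ : ℝ, 0 ≤ τ → x0 * Real.exp (-α * τ) - K < 0 := by
    intro τ hτ
    have h1 : Real.exp (-α * τ) ≤ 1 := Real.exp_le_one_iff.2 (by nlinarith)
    nlinarith [Real.exp_pos (-α * τ)]
  -- the explicit inverse function G with G (tsw tf) = tf
  set G : ℝ → ℝ := fun τ =>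
    τ + (Real.log (x0 * Real.exp (-α * τ) - K) - Real.log (x0 - K)) / (α + ρ * ubar)
    with hGdef
  -- derivative of G
  set gd : ℝ → ℝ := fun τ =>
    1 + x0 * (Real.exp (-α * τ) * -α) / (x0 * Real.exp (-α * τ) - K) / (α + ρ * ubar)
    with hgddef
  have hGderiv : ∀ τ : ℝ, x0 * Real.exp (-α * τ) - K ≠ 0 → HasDerivAt G (gd τ) τ := by
    intro τ hne
    have h1 : HasDerivAt (fun x : ℝ => -α * x) (-α) τ := by
      simpa using (hasDerivAt_id τ).const_mul (-α)
    have h2 : HasDerivAt (fun x : ℝ => Real.exp (-α * x)) (Real.exp (-α * τ) * -α) τ :=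
      (Real.hasDerivAt_exp (-α * τ)).comp τ h1
    have h3 : HasDerivAt (fun x : ℝ => x0 * Real.exp (-α * x) - K)
        (x0 * (Real.exp (-α * τ) * -α)) τ := by
      simpa using (h2.const_mul x0).sub_const K
    have h4 := ((h3.log hne).sub_const (Real.log (x0 - K))).div_const (α + ρ * ubar)
    have h5 := (hasDerivAt_id τ).add h4
    rw [hGdef, hgddef]
    exact h5
  have hgdpos : ∀ τ : ℝ, 0 ≤ τ → 0 < gd τ := by
    intro τ hτ
    have hD := hDneg τ hτ
    have h1 : x0 * (Real.exp (-α * τ) * -α) < 0 := by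
      nlinarith [mul_pos (mul_pos hx0 (Real.exp_pos (-α * τ))) hα]
    have h2 : 0 < x0 * (Real.exp (-α * τ) * -α) / (x0 * Real.exp (-α * τ) - K) :=
      div_pos_of_neg_of_neg h1 hD
    rw [hgddef]
    have := div_pos h2 hApos
    linarith
  -- G inverts tsw
  have hGts : ∀ tf : ℝ, 0 < tf → G (tsw tf) = tf := by
    intro tf htf
    obtain ⟨⟨hτ0, hτtf⟩, hF⟩ := htsw tf htf
    set τ := tsw tf
    have hD := hDneg τ hτ0.le
    have hxK : x0 - K ≠ 0 := by linarith
    have hFe : Real.exp ((-α - ρ * ubar) * (tf - τ)) * (x0 * Real.exp (-α * τ) - K)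
        = x0 - K := by
      unfold F at hF; linarith
    have hlog := congrArg Real.log hFe
    rw [Real.log_mul (Real.exp_ne_zero _) hD.ne, Real.log_exp] at hlog
    rw [hGdef]
    simp only []
    have : Real.log (x0 * Real.exp (-α * τ) - K) - Real.log (x0 - K)
        = (α + ρ * ubar) * (tf - τ) := by linarith
    rw [this]
    field_simp
    ring
  -- G is strictly monotone on [0, ∞)
  have hmono : StrictMonoOn G (Set.Ici 0) := by
    apply strictMonoOn_of_deriv_pos (convex_Ici 0)
    · intro x hx
      exact (hGderiv x (hDneg x hx).ne).continuousAt.continuousWithinAt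
    · intro x hx
      rw [interior_Ici] at hx
      rw [(hGderiv x (hDneg x (le_of_lt hx)).ne).deriv]
      exact hgdpos x hx.le
  -- tsw is continuous on (0, ∞)
  have hcont : ∀ tf : ℝ, 0 < tf → ContinuousAt tsw tf := by
    intro tf htf
    obtain ⟨⟨hτ0, hτtf⟩, _⟩ := htsw tf htf
    rw [ContinuousAt, tendsto_order]
    constructor
    · intro a ha
      rcases le_or_gt a 0 with h | h
      · filter_upwards [Ioi_mem_nhds htf] with t ht
        exact lt_of_le_of_lt h (htsw t ht).1.1
      · have hGa : G a < tf := by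
          rw [← hGts tf htf]; exact hmono h.le hτ0.le ha
        filter_upwards [Ioi_mem_nhds hGa, Ioi_mem_nhds htf] with t ht1 ht2
        by_contra hle
        push_neg at hle
        have : G (tsw t) ≤ G a :=
          hmono.monotoneOn (htsw t ht2).1.1.le h.le hle
        rw [hGts t ht2] at this
        exact absurd ht1 (not_lt.2 this)
    · intro b hb
      have hb0 : 0 < b := lt_trans hτ0 hb
      have hGb : tf < G b := by
        rw [← hGts tf htf]; exact hmono hτ0.le hb0.le hb
      filter_upwards [Iio_mem_nhds hGb, Ioi_mem_nhds htf] with t ht1 ht2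
      by_contra hle
      push_neg at hle
      have : G b ≤ G (tsw t) := hmono.monotoneOn hb0.le (htsw t ht2).1.1.le hle
      rw [hGts t ht2] at this
      exact absurd ht1 (not_lt.2 this)
  -- the derivative statement
  have hmain : ∀ tf : ℝ, 0 < tf →
      HasDerivAt tsw
          (1 + α * x0 / ((ρ * x0 - β * Real.exp (α * tsw tf)) * ubar)) tf ∧
        0 < 1 + α * x0 / ((ρ * x0 - β * Real.exp (α * tsw tf)) * ubar) := by
    intro tf htf
    obtain ⟨⟨hτ0, hτtf⟩, _⟩ := htsw tf htf
    set τ := tsw tf with hτdef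
    have hD := hDneg τ hτ0.le
    have hd : HasDerivAt G (gd τ) τ := hGderiv τ hD.ne
    have hgdp := hgdpos τ hτ0.le
    have hinv : ∀ᶠ y in nhds tf, G (tsw y) = y := by
      filter_upwards [Ioi_mem_nhds htf] with t ht
      exact hGts t ht
    have hder : HasDerivAt tsw (gd τ)⁻¹ tf :=
      HasDerivAt.of_local_left_inverse (hcont tf htf) hd hgdp.ne' hinv
    -- identify the derivative
    have hE1 : (1 : ℝ) ≤ Real.exp (α * τ) := Real.one_le_exp_iff.2 (by positivity)
    have hden : (ρ * x0 - β * Real.exp (α * τ)) * ubar < 0 := by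
      have h2 : β ≤ β * Real.exp (α * τ) := by nlinarith
      have h3 : ρ * x0 - β * Real.exp (α * τ) < 0 := by linarith
      exact mul_neg_of_neg_of_pos h3 hu
    have hEinv : Real.exp (α * τ) = (Real.exp (-α * τ))⁻¹ := by
      rw [← Real.exp_neg]; ring_nf
    have hEne : Real.exp (-α * τ) ≠ 0 := Real.exp_ne_zero _
    set E : ℝ := Real.exp (-α * τ) with hEdef
    have hEpos : 0 < E := Real.exp_pos _
    have h5 : x0 * E * (α + ρ * ubar) < β * ubar := by
      have h6 : x0 * E < β * ubar / (α + ρ * ubar) := by rw [← hKdef]; linarith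
      calc x0 * E * (α + ρ * ubar)
          < (β * ubar / (α + ρ * ubar)) * (α + ρ * ubar) :=
            mul_lt_mul_of_pos_right h6 hApos
        _ = β * ubar := by field_simp
    have hDA : x0 * E * (α + ρ * ubar) - β * ubar ≠ 0 := ne_of_lt (by linarith)
    have h4 : ρ * x0 * E - β ≠ 0 := by
      have h6 : 0 < x0 * E * α := by positivity
      refine ne_of_lt ?_
      by_contra hcon
      push_neg at hcon
      nlinarith [mul_le_mul_of_nonneg_right (by linarith : β ≤ ρ * x0 * E) hu.le]
    have hkey : (gd τ)⁻¹ = 1 + α * x0 / ((ρ * x0 - β * Real.exp (α * τ)) * ubar) := by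
      have hg1 : gd τ = (ubar * (ρ * x0 * E - β)) /
          ((x0 * E - β * ubar / (α + ρ * ubar)) * (α + ρ * ubar)) := by
        rw [hgddef, hKdef]
        simp only [← hEdef]
        have hD2 : x0 * E - β * ubar / (α + ρ * ubar)
            = (x0 * E * (α + ρ * ubar) - β * ubar) / (α + ρ * ubar) := by field_simp
        rw [hD2]
        field_simp
        have hX : x0 * E * α + x0 * E * ρ * ubar - ubar * β ≠ 0 := by
          intro h; apply hDA; linear_combination h
        linear_combination (-1 : ℝ) * inv_mul_cancel₀ hX
      have hc1 : 1 + α * x0 / ((ρ * x0 - β * Real.exp (α * τ)) * ubar) =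
          ((x0 * E - β * ubar / (α + ρ * ubar)) * (α + ρ * ubar)) /
            (ubar * (ρ * x0 * E - β)) := by
        rw [hEinv]
        have hden' : (ρ * x0 - β * E⁻¹) = (ρ * x0 * E - β) / E := by field_simp
        have hD2 : x0 * E - β * ubar / (α + ρ * ubar)
            = (x0 * E * (α + ρ * ubar) - β * ubar) / (α + ρ * ubar) := by field_simp
        rw [hden', hD2]
        field_simp
        have hY : x0 * E * ρ - β ≠ 0 := by
          intro h; apply h4; linear_combination h
        field_simp
        ring
      rw [hg1, hc1, inv_div]
    rw [hkey] at hder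
    refine ⟨hder, ?_⟩
    rw [← hkey]
    exact inv_pos.2 hgdp
  refine ⟨hmain, ?_⟩
  -- strict monotonicity
  intro a ha b hb hab
  by_contra hle
  push_neg at hle
  have h1 : G (tsw b) ≤ G (tsw a) :=
    hmono.monotoneOn (htsw b hb).1.1.le (htsw a ha).1.1.le hle
  rw [hGts a ha, hGts b hb] at h1
  exact absurd hab (not_lt.2 h1)
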